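/- Let G be a finite abelian group in which jx = 0 has only the trivial solution for all 1 ≤ j < k, and let f₁,...,f_k: G → ℂ with ‖fᵢ‖_∞ ≤ 1 for all i. Then |𝔼_{x,y ∈ G} f₁(x)f₂(x+y)···f_k(x+(k−1)y)| ≤ ‖f_k‖_{U^{k−1}}. -/

import Mathlib

open Finset
set_option linter.unusedSectionVars false

section AUX
variable {G : Type*} [AddCommGroup G] [Fintype G]

noncomputable def Wc (f : G → ℂ) (n : ℕ) (u : G) : ℂ :=
  if n % 2 = 0 then f u else (starRingEnd ℂ) (f u)

noncomputable def ddf (t : G) (f : G → ℂ) : G → ℂ :=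
  fun u => f u * (starRingEnd ℂ) (f (u + t))

lemma Wc_succ (f : G → ℂ) (n : ℕ) (u : G) :
    Wc f (n + 1) u = (starRingEnd ℂ) (Wc f n u) := by
  rcases Nat.even_or_odd n with h | h
  · simp [Wc, Nat.even_iff.1 h, Nat.succ_mod_two_eq_one_iff.2 (Nat.even_iff.1 h)]
  · simp [Wc, Nat.odd_iff.1 h, Nat.succ_mod_two_eq_zero_iff.2 (Nat.odd_iff.1 h)]

lemma Wc_dd (t : G) (f : G → ℂ) (n : ℕ) (u : G) :
    Wc (ddf t f) n u = Wc f n u * Wc f (n + 1) (u + t) := by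
  rcases Nat.even_or_odd n with h | h
  · simp [Wc, ddf, Nat.even_iff.1 h, Nat.succ_mod_two_eq_one_iff.2 (Nat.even_iff.1 h)]
  · simp [Wc, ddf, Nat.odd_iff.1 h, Nat.succ_mod_two_eq_zero_iff.2 (Nat.odd_iff.1 h),
      mul_comm]

/-- the cube product `∏_ω C^{|ω|} f(x + ω·h)` -/
noncomputable def Af {m : ℕ} (f : G → ℂ) (h : Fin m → G) (x : G) : ℂ :=
  ∏ ω : Fin m → Bool, Wc f (∑ i, if ω i then 1 else 0) (x + ∑ i, if ω i then h i else 0)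

noncomputable def gS (k : ℕ) (f : G → ℂ) : ℂ := ∑ x : G, ∑ h : Fin k → G, Af f h x

noncomputable def Gr (m : ℕ) (f : G → ℂ) : ℝ :=
  (∑ h : Fin m → G, ‖∑ x : G, Af f h x‖ ^ 2) / (Fintype.card G : ℝ) ^ (m + 2)

lemma conj_Af {m : ℕ} (f : G → ℂ) (h : Fin m → G) (x : G) :
    (starRingEnd ℂ) (Af f h x) =
      ∏ ω : Fin m → Bool, Wc f ((∑ i, if ω i then 1 else 0) + 1)
        (x + ∑ i, if ω i then h i else 0) := by
  rw [Af, map_prod]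
  exact Finset.prod_congr rfl fun ω _ => (Wc_succ f _ _).symm

lemma Af_cons {m : ℕ} (f : G → ℂ) (t : G) (h : Fin m → G) (x : G) :
    Af f (Fin.cons t h) x = Af f h x * (starRingEnd ℂ) (Af f h (x + t)) := by
  rw [Af]
  rw [← Equiv.prod_comp (Fin.consEquiv fun _ => Bool)
    (fun ω : Fin (m+1) → Bool => Wc f (∑ i, if ω i then 1 else 0)
      (x + ∑ i, if ω i then Fin.cons t h i else 0))]
  rw [Fintype.prod_prod_type, Fintype.prod_bool]
  have hcons : ∀ (b : Bool) (ω : Fin m → Bool),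
      (Fin.consEquiv fun _ => Bool) (b, ω) = Fin.cons b ω := fun _ _ => rfl
  simp only [hcons]
  have hwt : ∀ (b : Bool) (ω : Fin m → Bool),
      (∑ i : Fin (m+1), if (Fin.cons b ω : Fin (m+1) → Bool) i then (1:ℕ) else 0)
        = (if b then 1 else 0) + ∑ i : Fin m, if ω i then 1 else 0 := by
    intro b ω; rw [Fin.sum_univ_succ]; simp
  have hdot : ∀ (b : Bool) (ω : Fin m → Bool),
      (∑ i : Fin (m+1), if (Fin.cons b ω : Fin (m+1) → Bool) i then (Fin.cons t h : Fin (m+1) → G) i else 0)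
        = (if b then t else 0) + ∑ i : Fin m, if ω i then h i else 0 := by
    intro b ω; rw [Fin.sum_univ_succ]; simp
  simp only [hwt, hdot, reduceIte, zero_add]
  rw [conj_Af, mul_comm (Af f h x)]
  congr 1
  · exact Finset.prod_congr rfl fun ω _ => by rw [add_comm 1]; congr 1; rw [add_assoc]
  · simp [Af]

lemma gS_split (m : ℕ) (f : G → ℂ) :
    gS (m + 1) f = ∑ h : Fin m → G, ∑ x : G, ∑ t : G,
      Af f h x * (starRingEnd ℂ) (Af f h (x + t)) := by
  rw [gS]
  have hh : ∀ x : G, ∑ h : Fin (m+1) → G, Af f h x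
      = ∑ t : G, ∑ h : Fin m → G, Af f (Fin.cons t h) x := by
    intro x
    rw [← Equiv.sum_comp (Fin.consEquiv fun _ => G) (fun h => Af f h x),
      Fintype.sum_prod_type]
    rfl
  simp_rw [hh, Af_cons]
  have h2 : ∀ x : G, ∑ t : G, ∑ h : Fin m → G,
      Af f h x * (starRingEnd ℂ) (Af f h (x + t))
      = ∑ h : Fin m → G, ∑ t : G, Af f h x * (starRingEnd ℂ) (Af f h (x + t)) :=
    fun x => Finset.sum_comm
  simp_rw [h2]
  exact Finset.sum_comm

lemma gS_eq_norm (m : ℕ) (f : G → ℂ) :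
    gS (m + 1) f = ((∑ h : Fin m → G, ‖∑ x : G, Af f h x‖ ^ 2 : ℝ) : ℂ) := by
  rw [gS_split]
  push_cast
  refine Finset.sum_congr rfl fun h _ => ?_
  have h1 : ∀ x : G, ∑ t : G, Af f h x * (starRingEnd ℂ) (Af f h (x + t))
      = Af f h x * (starRingEnd ℂ) (∑ z : G, Af f h z) := by
    intro x
    rw [map_sum, Finset.mul_sum]
    exact Fintype.sum_equiv (Equiv.addLeft x) _ _ fun t => rfl
  simp_rw [h1]
  rw [← Finset.sum_mul, Complex.mul_conj]
  rw [Complex.normSq_eq_norm_sq]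
  push_cast
  ring

lemma Af_dd {m : ℕ} (t : G) (f : G → ℂ) (h : Fin m → G) (x : G) :
    Af (ddf t f) h x = Af f h x * (starRingEnd ℂ) (Af f h (x + t)) := by
  rw [conj_Af]
  simp only [Af]
  rw [← Finset.prod_mul_distrib]
  refine Finset.prod_congr rfl fun ω _ => ?_
  rw [Wc_dd]
  congr 2
  abel

lemma gS_rec (m : ℕ) (f : G → ℂ) :
    gS (m + 1) f = ∑ t : G, gS m (ddf t f) := by
  rw [gS_split]
  have key : ∀ t : G, gS m (ddf t f) = ∑ x : G, ∑ h : Fin m → G,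
      Af f h x * (starRingEnd ℂ) (Af f h (x + t)) := by
    intro t
    rw [gS]
    exact Finset.sum_congr rfl fun x _ => Finset.sum_congr rfl fun h _ => Af_dd t f h x
  simp_rw [key]
  have h2 : ∀ h : Fin m → G, ∑ x : G, ∑ t : G,
      Af f h x * (starRingEnd ℂ) (Af f h (x + t))
      = ∑ t : G, ∑ x : G, Af f h x * (starRingEnd ℂ) (Af f h (x + t)) :=
    fun h => Finset.sum_comm
  simp_rw [h2]
  have h3 : (∑ h : Fin m → G, ∑ t : G, ∑ x : G,
      Af f h x * (starRingEnd ℂ) (Af f h (x + t)))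
      = ∑ t : G, ∑ h : Fin m → G, ∑ x : G,
      Af f h x * (starRingEnd ℂ) (Af f h (x + t)) := Finset.sum_comm
  rw [h3]
  exact Finset.sum_congr rfl fun t _ => Finset.sum_comm

end AUX

noncomputable def gowersPow {G : Type*} [AddCommGroup G] [Fintype G] (k : ℕ) (f : G → ℂ) : ℂ :=
  (∑ x : G, ∑ h : Fin k → G, ∏ ω : Fin k → Bool,
      (if (∑ i, if ω i then 1 else 0) % 2 = 0 then
        f (x + ∑ i, if ω i then h i else 0)
      else (starRingEnd ℂ) (f (x + ∑ i, if ω i then h i else 0)))) /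
    (Fintype.card G : ℂ) ^ (k + 1)

section MAIN
variable {G : Type*} [AddCommGroup G] [Fintype G]

lemma gowersPow_eq_gS (k : ℕ) (f : G → ℂ) :
    gowersPow k f = gS k f / (Fintype.card G : ℂ) ^ (k + 1) := rfl

lemma cardG_pos : 0 < (Fintype.card G : ℝ) := by exact_mod_cast Fintype.card_pos

lemma Gr_nonneg (m : ℕ) (f : G → ℂ) : 0 ≤ Gr m f := by
  have := @cardG_pos G _ _
  rw [Gr]; positivity

lemma gowersPow_eq_Gr (m : ℕ) (f : G → ℂ) :
    gowersPow (m + 1) f = ((Gr m f : ℝ) : ℂ) := by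
  rw [gowersPow_eq_gS, gS_eq_norm, Gr]
  push_cast
  ring

lemma Gr_rec (m : ℕ) (f : G → ℂ) :
    Gr (m + 1) f * (Fintype.card G : ℝ) = ∑ t : G, Gr m (ddf t f) := by
  have hc : (0:ℝ) < (Fintype.card G : ℝ) := cardG_pos
  have h1 := gS_rec (m + 1) f
  rw [gS_eq_norm (m + 1) f] at h1
  have h2 : ∀ t : G, gS (m + 1) (ddf t f)
      = ((Gr m (ddf t f) * (Fintype.card G : ℝ) ^ (m + 2) : ℝ) : ℂ) := by
    intro t
    rw [gS_eq_norm, Gr, div_mul_cancel₀]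
    positivity
  simp_rw [h2] at h1
  rw [← Complex.ofReal_sum] at h1
  have h3 := Complex.ofReal_injective h1
  rw [← Finset.sum_mul] at h3
  rw [Gr]
  rw [div_mul_eq_mul_div, div_eq_iff (by positivity)]
  rw [h3]
  ring
end MAIN

section MAIN2
variable {G : Type*} [AddCommGroup G] [Fintype G]

noncomputable def Pap {k : ℕ} (f : Fin k → G → ℂ) : ℂ :=
  ∑ x : G, ∑ y : G, ∏ i : Fin k, f i (x + (i : ℕ) • y)

lemma Af_zero (f : G → ℂ) (h : Fin 0 → G) (x : G) : Af f h x = f x := by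
  simp [Af, Wc]

lemma Gr_zero (f : G → ℂ) : Gr 0 f = ‖∑ x : G, f x‖ ^ 2 / (Fintype.card G : ℝ) ^ 2 := by
  rw [Gr]
  simp_rw [Af_zero]
  rw [Fintype.sum_subsingleton _ (fun _ => (0:G))]

lemma norm_sum_le_card (f : G → ℂ) (hf : ∀ x, ‖f x‖ ≤ 1) :
    ‖∑ x : G, f x‖ ≤ (Fintype.card G : ℝ) := by
  calc ‖∑ x : G, f x‖ ≤ ∑ x : G, ‖f x‖ := norm_sum_le _ _
  _ ≤ ∑ _x : G, (1:ℝ) := Finset.sum_le_sum fun x _ => hf x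
  _ = (Fintype.card G : ℝ) := by simp

lemma main_base (f : Fin 2 → G → ℂ) (hf : ∀ i x, ‖f i x‖ ≤ 1) :
    ‖Pap f / (Fintype.card G : ℂ) ^ 2‖ ^ (2 ^ 1) ≤ Gr 0 (f (Fin.last 1)) := by
  have hc : (0:ℝ) < (Fintype.card G : ℝ) := cardG_pos
  have hP : Pap f = (∑ x : G, f 0 x) * ∑ z : G, f (Fin.last 1) z := by
    rw [Pap]
    have h1 : ∀ x y : G, ∏ i : Fin 2, f i (x + (i:ℕ) • y) = f 0 x * f (Fin.last 1) (x + y) := by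
      intro x y
      have hl : (Fin.last 1) = (1 : Fin 2) := rfl
      rw [Fin.prod_univ_two, hl]
      norm_num
    simp_rw [h1]
    have h2 : ∀ x : G, ∑ y : G, f 0 x * f (Fin.last 1) (x + y)
        = f 0 x * ∑ z : G, f (Fin.last 1) z := by
      intro x
      rw [← Finset.mul_sum]
      congr 1
      exact Fintype.sum_equiv (Equiv.addLeft x) _ _ fun y => rfl
    simp_rw [h2]
    rw [← Finset.sum_mul]
  rw [hP, Gr_zero]
  rw [norm_div, norm_mul, norm_pow]
  have hcn : ‖(Fintype.card G : ℂ)‖ = (Fintype.card G : ℝ) := by simp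
  rw [hcn]
  set a := ‖∑ x : G, f 0 x‖ with ha
  set b := ‖∑ x : G, f (Fin.last 1) x‖ with hb
  have h0a : 0 ≤ a := norm_nonneg _
  have h0b : 0 ≤ b := norm_nonneg _
  have haa : a ≤ (Fintype.card G : ℝ) := norm_sum_le_card _ (hf 0)
  calc (a * b / (Fintype.card G : ℝ) ^ 2) ^ 2 ^ 1
      ≤ ((Fintype.card G : ℝ) * b / (Fintype.card G : ℝ) ^ 2) ^ 2 ^ 1 := by gcongr
    _ = b ^ 2 / (Fintype.card G : ℝ) ^ 2 := by field_simp; ring_nf; field_simp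

lemma main_step (m : ℕ)
    (IH : ∀ (f : Fin (m+2) → G → ℂ),
      (∀ j : ℕ, 1 ≤ j → j < m+2 → ∀ x : G, j • x = 0 → x = 0) →
      (∀ i x, ‖f i x‖ ≤ 1) →
      ‖Pap f / (Fintype.card G : ℂ) ^ 2‖ ^ (2 ^ (m+1)) ≤ Gr m (f (Fin.last (m+1))))
    (f : Fin (m+3) → G → ℂ)
    (htor : ∀ j : ℕ, 1 ≤ j → j < m+3 → ∀ x : G, j • x = 0 → x = 0)
    (hf : ∀ i x, ‖f i x‖ ≤ 1) :
    ‖Pap f / (Fintype.card G : ℂ) ^ 2‖ ^ (2 ^ (m+2)) ≤ Gr (m+1) (f (Fin.last (m+2))) := by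
  have hc : (0:ℝ) < (Fintype.card G : ℝ) := cardG_pos
  set N : ℝ := (Fintype.card G : ℝ) with hN
  set Q : G → G → ℂ := fun x y => ∏ i : Fin (m+2), f i.succ (x + ((i:ℕ)+1) • y) with hQ
  set F : G → ℂ := fun x => ∑ y : G, Q x y with hF
  set gfun : G → Fin (m+2) → G → ℂ :=
    fun h j u => f j.succ u * (starRingEnd ℂ) (f j.succ (u + ((j:ℕ)+1) • h)) with hgfun
  -- Step A
  have hPA : Pap f = ∑ x : G, f 0 x * F x := by
    rw [Pap]
    have h1 : ∀ x y : G, ∏ i : Fin (m+3), f i (x + (i:ℕ) • y) = f 0 x * Q x y := by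
      intro x y
      rw [Fin.prod_univ_succ]
      simp [hQ, Fin.val_succ]
    refine Finset.sum_congr rfl fun x _ => ?_
    simp_rw [h1]
    rw [← Finset.mul_sum]
  -- Step B
  have hB : ‖Pap f‖ ≤ ∑ x : G, ‖F x‖ := by
    rw [hPA]
    calc ‖∑ x : G, f 0 x * F x‖ ≤ ∑ x : G, ‖f 0 x * F x‖ := norm_sum_le _ _
    _ ≤ ∑ x : G, ‖F x‖ := by
        refine Finset.sum_le_sum fun x _ => ?_
        rw [norm_mul]
        calc ‖f 0 x‖ * ‖F x‖ ≤ 1 * ‖F x‖ :=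
          mul_le_mul_of_nonneg_right (hf 0 x) (norm_nonneg _)
        _ = ‖F x‖ := one_mul _
  -- Step C
  have hC : (∑ x : G, ‖F x‖) ^ 2 ≤ N * ∑ x : G, ‖F x‖ ^ 2 := by
    have := sq_sum_le_card_mul_sum_sq (s := (univ : Finset G)) (f := fun x => ‖F x‖)
    simpa using this
  -- Step D
  have hD : ((∑ x : G, ‖F x‖ ^ 2 : ℝ) : ℂ) = ∑ h : G, Pap (gfun h) := by
    rw [Complex.ofReal_sum]
    have hsq : ∀ x : G, ((‖F x‖ ^ 2 : ℝ) : ℂ) = F x * (starRingEnd ℂ) (F x) := by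
      intro x
      rw [Complex.mul_conj, Complex.normSq_eq_norm_sq]
    have hFc : ∀ x : G, F x * (starRingEnd ℂ) (F x)
        = ∑ y : G, ∑ h : G, Q x y * (starRingEnd ℂ) (Q x (y + h)) := by
      intro x
      rw [hF]
      try simp only
      rw [Finset.sum_mul]
      refine Finset.sum_congr rfl fun y _ => ?_
      rw [map_sum, Finset.mul_sum]
      refine (Fintype.sum_equiv (Equiv.addLeft y) _ _ fun h => rfl).symm
    simp_rw [hsq, hFc]
    -- reorder: ∑ x ∑ y ∑ h → ∑ h ∑ x ∑ y
    have hr1 : ∀ x : G, ∑ y : G, ∑ h : G, Q x y * (starRingEnd ℂ) (Q x (y + h))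
        = ∑ h : G, ∑ y : G, Q x y * (starRingEnd ℂ) (Q x (y + h)) :=
      fun x => Finset.sum_comm
    simp_rw [hr1]
    rw [Finset.sum_comm]
    refine Finset.sum_congr rfl fun h _ => ?_
    -- ∑ x ∑ y Q x y conj Q x (y+h) = Pap (gfun h)
    rw [Pap]
    have key : ∀ y x : G, (∏ j : Fin (m+2), gfun h j (x + (j:ℕ) • y))
        = Q (x - y) y * (starRingEnd ℂ) (Q (x - y) (y + h)) := by
      intro y x
      rw [hQ]
      try simp only
      rw [map_prod, ← Finset.prod_mul_distrib]
      refine Finset.prod_congr rfl fun j _ => ?_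
      rw [hgfun]
      try simp only
      have e1 : x - y + ((j:ℕ)+1) • y = x + (j:ℕ) • y := by
        rw [succ_nsmul]; abel
      have e2 : x - y + ((j:ℕ)+1) • (y + h) = x + (j:ℕ) • y + ((j:ℕ)+1) • h := by
        rw [smul_add, succ_nsmul]; abel
      rw [e1, e2]
    have swap : ∀ y : G, ∑ x : G, (∏ j : Fin (m+2), gfun h j (x + (j:ℕ) • y))
        = ∑ x : G, Q x y * (starRingEnd ℂ) (Q x (y + h)) := by
      intro y
      simp_rw [key]
      exact Fintype.sum_equiv (Equiv.subRight y) _ _ fun x => rfl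
    calc ∑ x : G, ∑ y : G, Q x y * (starRingEnd ℂ) (Q x (y + h))
        = ∑ y : G, ∑ x : G, Q x y * (starRingEnd ℂ) (Q x (y + h)) := Finset.sum_comm
    _ = ∑ y : G, ∑ x : G, ∏ j : Fin (m+2), gfun h j (x + (j:ℕ) • y) :=
        Finset.sum_congr rfl fun y _ => (swap y).symm
    _ = ∑ x : G, ∑ y : G, ∏ j : Fin (m+2), gfun h j (x + (j:ℕ) • y) := Finset.sum_comm
  -- Step E : apply IH
  have hbound : ∀ h : G, ∀ (j : Fin (m+2)) (u : G), ‖gfun h j u‖ ≤ 1 := by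
    intro h j u
    rw [hgfun]
    try simp only
    rw [norm_mul, RCLike.norm_conj]
    calc ‖f j.succ u‖ * ‖f j.succ (u + ((j:ℕ)+1) • h)‖ ≤ 1 * 1 :=
      mul_le_mul (hf _ _) (hf _ _) (norm_nonneg _) zero_le_one
    _ = 1 := one_mul 1
  have hlast : ∀ h : G, gfun h (Fin.last (m+1)) = ddf ((m+2) • h) (f (Fin.last (m+2))) := by
    intro h
    funext u
    rw [hgfun, ddf]
    try simp only
    rw [Fin.succ_last, Fin.val_last]
  have hE : ∀ h : G, ‖Pap (gfun h) / (Fintype.card G : ℂ) ^ 2‖ ^ (2 ^ (m+1))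
      ≤ Gr m (ddf ((m+2) • h) (f (Fin.last (m+2)))) := by
    intro h
    rw [← hlast h]
    exact IH (gfun h) (fun j h1 h2 => htor j h1 (by omega)) (hbound h)
  -- Step F : combine
  have hnormdiv : ∀ z : ℂ, ‖z / (Fintype.card G : ℂ) ^ 2‖ = ‖z‖ / N ^ 2 := by
    intro z
    rw [norm_div, norm_pow]
    congr 2
    simp [hN]
  set u : G → ℝ := fun h => ‖Pap (gfun h) / (Fintype.card G : ℂ) ^ 2‖ with hu
  have hu0 : ∀ h, 0 ≤ u h := fun h => norm_nonneg _
  have hsum : ∑ x : G, ‖F x‖ ^ 2 ≤ ∑ h : G, u h * N ^ 2 := by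
    have h1 : (∑ x : G, ‖F x‖ ^ 2) = (((∑ x : G, ‖F x‖ ^ 2 : ℝ) : ℂ)).re := by
      rw [Complex.ofReal_re]
    rw [h1, hD]
    calc (∑ h : G, Pap (gfun h)).re ≤ ‖∑ h : G, Pap (gfun h)‖ := Complex.re_le_norm _
    _ ≤ ∑ h : G, ‖Pap (gfun h)‖ := norm_sum_le _ _
    _ = ∑ h : G, u h * N ^ 2 := by
        refine Finset.sum_congr rfl fun h _ => ?_
        rw [hu]
        try simp only
        rw [hnormdiv]
        field_simp
  have ha2 : ‖Pap f / (Fintype.card G : ℂ) ^ 2‖ ^ 2 ≤ (∑ h : G, u h) / N := by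
    rw [hnormdiv]
    rw [div_pow, div_le_div_iff₀ (by positivity) hc]
    calc ‖Pap f‖ ^ 2 * N ≤ (∑ x : G, ‖F x‖) ^ 2 * N :=
          mul_le_mul_of_nonneg_right (pow_le_pow_left₀ (norm_nonneg _) hB 2) hc.le
    _ ≤ (N * ∑ x : G, ‖F x‖ ^ 2) * N := mul_le_mul_of_nonneg_right hC hc.le
    _ ≤ (N * ∑ h : G, u h * N ^ 2) * N :=
          mul_le_mul_of_nonneg_right (mul_le_mul_of_nonneg_left hsum hc.le) hc.le
    _ = (∑ h : G, u h) * ((N:ℝ) ^ 2) ^ 2 := by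
          rw [← Finset.sum_mul]; ring
  -- power mean
  obtain ⟨n, hn⟩ : ∃ n : ℕ, 2 ^ (m+1) = n + 1 :=
    ⟨2 ^ (m+1) - 1, (Nat.succ_pred_eq_of_pos (Nat.pow_pos (by norm_num))).symm⟩
  have hpm : ((∑ h : G, u h) / N) ^ (2 ^ (m+1)) ≤ (∑ h : G, u h ^ (2 ^ (m+1))) / N := by
    rw [hn]
    have key := pow_sum_div_card_le_sum_pow (s := (univ : Finset G))
      (f := u) (fun i _ => hu0 i) n
    rw [div_pow]
    rw [div_le_div_iff₀ (by positivity) hc]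
    have hcard : ((univ : Finset G).card : ℝ) = N := by simp [hN]
    rw [hcard] at key
    rw [div_le_iff₀ (by positivity)] at key
    calc (∑ h : G, u h) ^ (n+1) * N ≤ (∑ h : G, u h ^ (n+1)) * N ^ n * N :=
          mul_le_mul_of_nonneg_right key hc.le
    _ = (∑ h : G, u h ^ (n+1)) * N ^ (n+1) := by ring
  -- reindex h ↦ (m+2)•h
  have hinj : Function.Injective (fun h : G => (m+2) • h) := by
    intro a b hab
    have h0 : (m+2) • (a - b) = 0 := by
      rw [smul_sub, sub_eq_zero]
      exact hab
    have := htor (m+2) (by omega) (by omega) (a - b) h0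
    rwa [sub_eq_zero] at this
  have hbij : Function.Bijective (fun h : G => (m+2) • h) :=
    Finite.injective_iff_bijective.1 hinj
  have hre : ∑ h : G, Gr m (ddf ((m+2) • h) (f (Fin.last (m+2))))
      = ∑ t : G, Gr m (ddf t (f (Fin.last (m+2)))) :=
    Fintype.sum_bijective _ hbij _ _ (fun h => rfl)
  have hfinal : ∑ h : G, u h ^ (2 ^ (m+1)) ≤ ∑ t : G, Gr m (ddf t (f (Fin.last (m+2)))) := by
    rw [← hre]
    exact Finset.sum_le_sum fun h _ => hE h
  calc ‖Pap f / (Fintype.card G : ℂ) ^ 2‖ ^ 2 ^ (m+2)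
      = (‖Pap f / (Fintype.card G : ℂ) ^ 2‖ ^ 2) ^ 2 ^ (m+1) := by
        rw [← pow_mul]
        congr 1
        ring
    _ ≤ ((∑ h : G, u h) / N) ^ 2 ^ (m+1) :=
        pow_le_pow_left₀ (by positivity) ha2 _
    _ ≤ (∑ h : G, u h ^ (2 ^ (m+1))) / N := hpm
    _ ≤ (∑ t : G, Gr m (ddf t (f (Fin.last (m+2))))) / N := by
        gcongr
    _ = Gr (m+1) (f (Fin.last (m+2))) := by
        rw [← Gr_rec, mul_div_assoc, div_self hc.ne', mul_one]

lemma main_all (m : ℕ) (f : Fin (m+2) → G → ℂ)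
    (htor : ∀ j : ℕ, 1 ≤ j → j < m+2 → ∀ x : G, j • x = 0 → x = 0)
    (hf : ∀ i x, ‖f i x‖ ≤ 1) :
    ‖Pap f / (Fintype.card G : ℂ) ^ 2‖ ^ (2 ^ (m+1)) ≤ Gr m (f (Fin.last (m+1))) := by
  induction m with
  | zero => exact main_base f hf
  | succ m ih =>
      exact main_step m (fun g htor' hg' => ih g htor' hg') f htor hf

end MAIN2

theorem generalized_von_neumann_aps {G : Type*} [AddCommGroup G] [Fintype G]
    (k : ℕ) (hk : 2 ≤ k)
    (htor : ∀ j : ℕ, 1 ≤ j → j < k → ∀ x : G, j • x = 0 → x = 0)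
    (f : Fin k → G → ℂ) (hf : ∀ i x, ‖f i x‖ ≤ 1) :
    ‖(∑ x : G, ∑ y : G, ∏ i : Fin k, f i (x + (i : ℕ) • y)) /
        (Fintype.card G : ℂ) ^ 2‖ ≤
      ‖gowersPow (k - 1) (f ⟨k - 1, by omega⟩)‖ ^ ((1 : ℝ) / 2 ^ (k - 1)) := by
  obtain ⟨m, rfl⟩ : ∃ m, k = m + 2 := ⟨k - 2, by omega⟩
  have hmain := main_all m f htor hf
  have hPap : (∑ x : G, ∑ y : G, ∏ i : Fin (m+2), f i (x + (i:ℕ) • y)) = Pap f := rfl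
  rw [hPap]
  have hidx : (⟨m + 2 - 1, by omega⟩ : Fin (m+2)) = Fin.last (m+1) := rfl
  rw [hidx]
  have hk1 : m + 2 - 1 = m + 1 := rfl
  rw [hk1]
  have hb : ‖gowersPow (m+1) (f (Fin.last (m+1)))‖ = Gr m (f (Fin.last (m+1))) := by
    rw [gowersPow_eq_Gr]
    rw [Complex.norm_real]
    exact abs_of_nonneg (Gr_nonneg _ _)
  rw [hb]
  set a := ‖Pap f / (Fintype.card G : ℂ) ^ 2‖ with ha
  set b := Gr m (f (Fin.last (m+1))) with hbdef
  have ha0 : 0 ≤ a := norm_nonneg _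
  have hb0 : 0 ≤ b := Gr_nonneg _ _
  have hexp : a = (a ^ (2 ^ (m+1) : ℕ)) ^ ((1 : ℝ) / 2 ^ (m+1)) := by
    rw [← Real.rpow_natCast a (2 ^ (m+1)), ← Real.rpow_mul ha0]
    have : ((2 ^ (m+1) : ℕ) : ℝ) * ((1 : ℝ) / 2 ^ (m+1)) = 1 := by
      push_cast
      field_simp
    rw [this, Real.rpow_one]
  rw [hexp]
  exact Real.rpow_le_rpow (by positivity) hmain (by positivity)
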